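/- Let G be a finite group, ν an acyclic probability measure with H = ⟨supp(ν)⟩, and η a probability measure constant on each left coset of H. Then the basin of attraction of η under T_ν, i.e., {μ ∈ P(G) : lim_m T_ν^m(μ) = η}, is a convex set; specifically it is the intersection of the simplex with an affine subspace determined by the conditions that μ assigns each left coset gH total mass |H|·η({g}). -/
import Mathlib


open Pointwise Filter Topology

/-- Convolution of two probability vectors on a finite group. -/
def conv {G : Type*} [Group G] [Fintype G] (p q : G → ℝ) : G → ℝ :=
  fun g => ∑ a : G, p a * q (a⁻¹ * g)

/-- `k`-fold convolution power of a probability vector. -/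
def convPow {G : Type*} [Group G] [Fintype G] [DecidableEq G] (p : G → ℝ) : ℕ → G → ℝ
  | 0 => fun g => if g = 1 then 1 else 0
  | n + 1 => conv (convPow p n) p

section aux
open scoped Classical
set_option linter.unusedSectionVars false
variable {G : Type*} [Group G] [Fintype G] [DecidableEq G]

lemma sum_shift (q : G → ℝ) (g : G) : ∑ a : G, q (a⁻¹ * g) = ∑ x : G, q x := by
  exact Fintype.sum_equiv ((Equiv.inv G).trans (Equiv.mulRight g)) _ _ (fun a => rfl)

lemma sum_shift' (q : G → ℝ) (x : G) : ∑ a : G, q (x * a) = ∑ y : G, q y :=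
  Fintype.sum_equiv (Equiv.mulLeft x) _ _ (fun a => rfl)

lemma conv_assoc (p q r : G → ℝ) : conv (conv p q) r = conv p (conv q r) := by
  funext g
  simp only [conv, Finset.sum_mul, Finset.mul_sum]
  rw [Finset.sum_comm]
  refine Finset.sum_congr rfl fun a _ => ?_
  refine Fintype.sum_equiv (Equiv.mulLeft a⁻¹) _ _ (fun b => ?_)
  simp [mul_assoc, mul_inv_rev]

lemma conv_sum (p q : G → ℝ) : ∑ g, conv p q g = (∑ g, p g) * (∑ g, q g) := by
  simp only [conv]
  rw [Finset.sum_comm, Finset.sum_mul]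
  refine Finset.sum_congr rfl fun a _ => ?_
  rw [← Finset.mul_sum, sum_shift' q a⁻¹]

lemma conv_nonneg' {p q : G → ℝ} (hp : ∀ g, 0 ≤ p g) (hq : ∀ g, 0 ≤ q g) (g : G) :
    0 ≤ conv p q g :=
  Finset.sum_nonneg fun a _ => mul_nonneg (hp a) (hq _)

lemma convPow_nonneg {p : G → ℝ} (hp : ∀ g, 0 ≤ p g) (n : ℕ) (g : G) : 0 ≤ convPow p n g := by
  induction n generalizing g with
  | zero => simp only [convPow]; positivity
  | succ n ih => exact conv_nonneg' ih hp g

lemma convPow_sum {p : G → ℝ} (hp : ∑ g, p g = 1) (n : ℕ) : ∑ g, convPow p n g = 1 := by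
  induction n with
  | zero => simp [convPow]
  | succ n ih => rw [convPow, conv_sum, ih, hp, one_mul]

lemma conv_delta (p : G → ℝ) : conv p (convPow q 0) = p := by
  funext g
  simp only [conv, convPow, mul_ite, mul_one, mul_zero, inv_mul_eq_one]
  simp

lemma convPow_add (p : G → ℝ) (m n : ℕ) :
    convPow p (m + n) = conv (convPow p m) (convPow p n) := by
  induction n with
  | zero => rw [Nat.add_zero, conv_delta]
  | succ n ih => rw [← Nat.add_assoc, convPow, convPow, ih, conv_assoc]

end aux
section aux2
open scoped Classical
set_option linter.unusedSectionVars false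
variable {G : Type*} [Group G] [Fintype G] [DecidableEq G] {H : Subgroup G}

lemma sum_subtype_support {q : G → ℝ} (hq : ∀ x ∉ H, q x = 0) :
    ∑ h : H, q ↑h = ∑ x, q x := by
  rw [← Finset.sum_subtype (Finset.univ.filter (· ∈ H)) (by simp) q,
    Finset.sum_filter]
  refine (Finset.sum_congr rfl fun x _ => ?_).symm
  by_cases hx : x ∈ H <;> simp [hx, hq]

lemma ind_reindex (F : G → ℝ) (g : G) :
    ∑ a : G, (if a⁻¹ * g ∈ H then F a else 0) = ∑ h : H, F (g * ↑h) := by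
  have key : (∑ b : G, if b ∈ H then F (g * b) else 0)
      = ∑ a : G, (if a⁻¹ * g ∈ H then F a else 0) :=
    Fintype.sum_equiv (Equiv.mulLeft g) _ _ (fun b => by
      simp only [Equiv.coe_mulLeft, mul_inv_rev, mul_assoc, inv_mul_cancel, mul_one,
        H.inv_mem_iff])
  rw [← key, ← Finset.sum_filter]
  exact Finset.sum_subtype _ (by simp) fun b => F (g * b)

lemma inner_coset {q : G → ℝ} (hq : ∀ x ∉ H, q x = 0) (x : G) :
    ∑ h : H, q (x * ↑h) = if x ∈ H then ∑ y, q y else 0 := by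
  by_cases hx : x ∈ H
  · rw [if_pos hx, ← sum_subtype_support hq]
    exact Fintype.sum_equiv (Equiv.mulLeft (⟨x, hx⟩ : H)) _ _ (fun h => rfl)
  · rw [if_neg hx]
    refine Finset.sum_eq_zero fun h _ => hq _ (fun hmem => hx ?_)
    have := H.mul_mem hmem (H.inv_mem h.2)
    simpa [mul_assoc] using this

lemma conv_cosetSum {μ q : G → ℝ} (hq : ∀ x ∉ H, q x = 0) (hq1 : ∑ x, q x = 1) (g : G) :
    ∑ h : H, conv μ q (g * ↑h) = ∑ h : H, μ (g * ↑h) := by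
  simp only [conv]
  rw [Finset.sum_comm]
  rw [← ind_reindex μ g]
  refine Finset.sum_congr rfl fun a _ => ?_
  rw [show ∑ h : H, μ a * q (a⁻¹ * (g * ↑h)) = μ a * ∑ h : H, q ((a⁻¹ * g) * ↑h) by
    rw [Finset.mul_sum]; simp [mul_assoc]]
  rw [inner_coset hq, hq1]
  by_cases h : a⁻¹ * g ∈ H <;> simp [h]

lemma conv_eta {η q : G → ℝ} (hconst : ∀ g h : G, h ∈ H → η (g * h) = η g)
    (hq : ∀ x ∉ H, q x = 0) (hq1 : ∑ x, q x = 1) : conv η q = η := by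
  funext g
  have : ∀ a : G, η a * q (a⁻¹ * g) = η g * q (a⁻¹ * g) := by
    intro a
    by_cases h : a⁻¹ * g ∈ H
    · have : η (g * (g⁻¹ * a)) = η g := hconst g _ (by simpa using H.inv_mem h)
      simp only [mul_inv_cancel_left] at this
      rw [this]
    · rw [hq _ h, mul_zero, mul_zero]
  simp only [conv, this, ← Finset.mul_sum, sum_shift, hq1, mul_one]

end aux2
section aux3
open scoped Classical
set_option linter.unusedSectionVars false
variable {G : Type*} [Group G] [Fintype G] [DecidableEq G] {H : Subgroup G}

lemma convPow_support {ν : G → ℝ} (hν : ∀ x ∉ H, ν x = 0) :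
    ∀ n, ∀ x ∉ H, convPow ν n x = 0 := by
  intro n
  induction n with
  | zero =>
    intro x hx
    have : x ≠ 1 := fun h => hx (h ▸ H.one_mem)
    simp [convPow, this]
  | succ n ih =>
    intro x hx
    rw [convPow, conv]
    refine Finset.sum_eq_zero fun a _ => ?_
    by_cases ha : a ∈ H
    · have : a⁻¹ * x ∉ H := fun h => hx (by simpa using H.mul_mem ha h)
      rw [hν _ this, mul_zero]
    · rw [ih a ha, zero_mul]

lemma convPow_pos {ν : G → ℝ} (hν0 : ∀ g, 0 ≤ ν g) :
    ∀ n, ∀ g ∈ ({x | 0 < ν x} : Set G) ^ n, 0 < convPow ν n g := by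
  intro n
  induction n with
  | zero =>
    intro g hg
    rw [pow_zero, Set.mem_one] at hg
    simp [convPow, hg]
  | succ n ih =>
    intro g hg
    rw [pow_succ] at hg
    obtain ⟨a, ha, b, hb, rfl⟩ := hg
    rw [convPow, conv]
    refine Finset.sum_pos' (fun c _ => mul_nonneg (convPow_nonneg hν0 n c) (hν0 _)) ⟨a,
      Finset.mem_univ a, ?_⟩
    have : a⁻¹ * (a * b) = b := by group
    rw [this]
    exact mul_pos (ih a ha) hb

lemma conv_abs_le (f q : G → ℝ) (g : G) : |conv f q g| ≤ ‖f‖ * ∑ x, |q x| := by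
  calc |conv f q g| ≤ ∑ a, |f a * q (a⁻¹ * g)| := Finset.abs_sum_le_sum_abs _ _
    _ ≤ ∑ a, ‖f‖ * |q (a⁻¹ * g)| := by
        refine Finset.sum_le_sum fun a _ => ?_
        rw [abs_mul]
        exact mul_le_mul_of_nonneg_right (by simpa [Real.norm_eq_abs] using norm_le_pi_norm f a)
          (abs_nonneg _)
    _ = ‖f‖ * ∑ x, |q x| := by rw [← Finset.mul_sum, sum_shift (fun x => |q x|) g]

lemma conv_prob_bound {q : G → ℝ} (hq0 : ∀ x, 0 ≤ q x) (hq1 : ∑ x, q x = 1) (f : G → ℝ)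
    (g : G) : |conv f q g| ≤ ‖f‖ := by
  have := conv_abs_le f q g
  rwa [show ∑ x, |q x| = 1 by rw [← hq1]; exact Finset.sum_congr rfl fun x _ => abs_of_nonneg (hq0 x),
    mul_one] at this

lemma sum_ind_card (H : Subgroup G) (ε : ℝ) :
    ∑ x : G, (if x ∈ H then ε else 0) = (Nat.card H : ℝ) * ε := by
  rw [← sum_subtype_support (H := H) (q := fun x => if x ∈ H then ε else 0)
    (fun x hx => by simp [hx])]
  rw [Finset.sum_congr rfl (fun (h : H) _ => if_pos h.2)]
  simp [Finset.sum_const, Nat.card_eq_fintype_card, mul_comm]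

lemma contraction {q : G → ℝ} (hq : ∀ x ∉ H, q x = 0) (hq0 : ∀ x, 0 ≤ q x)
    (hq1 : ∑ x, q x = 1) {ε : ℝ} (hε0 : 0 ≤ ε) (hε : ∀ h : H, ε ≤ q ↑h)
    {f : G → ℝ} (hf : ∀ g, ∑ h : H, f (g * ↑h) = 0) (g : G) :
    |conv f q g| ≤ ‖f‖ * (1 - ε * Nat.card H) := by
  set q' : G → ℝ := fun x => q x - (if x ∈ H then ε else 0) with hq'
  have hq'0 : ∀ x, 0 ≤ q' x := by
    intro x
    by_cases hx : x ∈ H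
    · simp only [hq', hx, if_true]; linarith [hε ⟨x, hx⟩]
    · simp [hq', hx, hq x hx]
  have key : conv f q g = conv f q' g := by
    simp only [conv, hq', mul_sub]
    rw [Finset.sum_sub_distrib]
    have : ∑ a : G, f a * (if a⁻¹ * g ∈ H then ε else 0)
        = ε * ∑ a : G, (if a⁻¹ * g ∈ H then f a else 0) := by
      rw [Finset.mul_sum]
      refine Finset.sum_congr rfl fun a _ => ?_
      by_cases h : a⁻¹ * g ∈ H <;> simp [h, mul_comm]
    rw [this, ind_reindex f g, hf g, mul_zero, sub_zero]
  rw [key]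
  calc |conv f q' g| ≤ ‖f‖ * ∑ x, |q' x| := conv_abs_le f q' g
    _ = ‖f‖ * (1 - ε * Nat.card H) := by
        congr 1
        rw [show ∑ x, |q' x| = ∑ x, q' x from
          Finset.sum_congr rfl fun x _ => abs_of_nonneg (hq'0 x)]
        simp only [hq', Finset.sum_sub_distrib, hq1, sum_ind_card H ε]
        ring

end aux3
section main
open scoped Classical
set_option linter.unusedSectionVars false
variable {G : Type*} [Group G] [Fintype G] [DecidableEq G]

lemma convPow_succ (p : G → ℝ) (n : ℕ) : convPow p (n + 1) = conv (convPow p n) p := rfl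

lemma conv_sub_left (x y q : G → ℝ) : conv (x - y) q = conv x q - conv y q := by
  funext g
  simp only [conv, Pi.sub_apply, sub_mul, Finset.sum_sub_distrib]

lemma main_tendsto (ν : G → ℝ) (h0 : ∀ g, 0 ≤ ν g) (h1 : ∑ g, ν g = 1)
    (H : Subgroup G) (hH : H = Subgroup.closure {g : G | 0 < ν g})
    (hacyclic : ∃ N : ℕ, 0 < N ∧ {g : G | 0 < ν g} ^ N = (H : Set G))
    (η : G → ℝ) (hconst : ∀ g h : G, h ∈ H → η (g * h) = η g)
    (μ : G → ℝ) (hcoset : ∀ g : G, ∑ h : H, μ (g * (h : G)) = (Nat.card H : ℝ) * η g) :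
    ∀ g : G, Filter.Tendsto (fun m => conv μ (convPow ν m) g) Filter.atTop (nhds (η g)) := by
  obtain ⟨N, hN, hSN⟩ := hacyclic
  have hsupp : ∀ x ∉ H, ν x = 0 := by
    intro x hx
    by_contra hne
    exact hx (hH ▸ Subgroup.subset_closure (Set.mem_setOf.mpr ((h0 x).lt_of_ne (Ne.symm hne))))
  set p : G → ℝ := convPow ν N with hp
  have hp0 : ∀ x, 0 ≤ p x := convPow_nonneg h0 N
  have hp1 : ∑ x, p x = 1 := convPow_sum h1 N
  have hpsupp : ∀ x ∉ H, p x = 0 := convPow_support hsupp N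
  have hppos : ∀ h : H, 0 < p ↑h := fun h =>
    convPow_pos h0 N ↑h (by rw [hSN]; exact h.2)
  set ε : ℝ := Finset.univ.inf' (Finset.univ_nonempty (α := H)) (fun h : H => p ↑h) with hε
  have hεle : ∀ h : H, ε ≤ p ↑h := fun h => Finset.inf'_le _ (Finset.mem_univ h)
  have hεpos : 0 < ε := (Finset.lt_inf'_iff _).mpr fun h _ => hppos h
  set c : ℝ := 1 - ε * Nat.card H with hc
  have hcard : (0:ℝ) < Nat.card H := by
    have : 0 < Nat.card H := Nat.card_pos
    exact_mod_cast this
  have hc1 : c < 1 := by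
    have : 0 < ε * Nat.card H := mul_pos hεpos hcard
    simp only [hc]; linarith
  have hc0 : 0 ≤ c := by
    have hsum : ∑ h : H, p ↑h = 1 := by rw [sum_subtype_support hpsupp, hp1]
    have hle : (Nat.card H : ℝ) * ε ≤ 1 := by
      rw [← hsum]
      calc (Nat.card H : ℝ) * ε = ∑ _h : H, ε := by
            simp [Finset.sum_const, Nat.card_eq_fintype_card, mul_comm]
        _ ≤ ∑ h : H, p ↑h := Finset.sum_le_sum fun h _ => hεle h
    simp only [hc]; nlinarith
  set F : ℕ → G → ℝ := fun m => conv μ (convPow ν m) - η with hF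
  have hFstep : ∀ m, F (m + 1) = conv (F m) ν := by
    intro m
    show conv μ (convPow ν (m + 1)) - η = conv (conv μ (convPow ν m) - η) ν
    rw [conv_sub_left, conv_eta hconst hsupp h1, convPow_succ, ← conv_assoc]
  have hFjump : ∀ m, F (m + N) = conv (F m) p := by
    intro m
    show conv μ (convPow ν (m + N)) - η = conv (conv μ (convPow ν m) - η) p
    rw [conv_sub_left, conv_eta hconst hpsupp hp1, hp, convPow_add, ← conv_assoc]
  have hFzero : ∀ m g, ∑ h : H, F m (g * ↑h) = 0 := by
    intro m g
    simp only [hF, Pi.sub_apply, Finset.sum_sub_distrib]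
    rw [conv_cosetSum (convPow_support hsupp m) (convPow_sum h1 m) g, hcoset g]
    rw [Finset.sum_congr rfl (fun (h : H) _ => hconst g ↑h h.2)]
    simp [Finset.sum_const, Nat.card_eq_fintype_card, mul_comm]
  have hmono : ∀ m, ‖F (m + 1)‖ ≤ ‖F m‖ := by
    intro m
    rw [pi_norm_le_iff_of_nonneg (norm_nonneg _)]
    intro g
    rw [hFstep m]
    simpa [Real.norm_eq_abs] using conv_prob_bound h0 h1 (F m) g
  have hmono' : ∀ m, ‖F m‖ ≤ ‖F 0‖ := by
    intro m
    induction m with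
    | zero => exact le_refl _
    | succ m ih => exact (hmono m).trans ih
  have hcontr : ∀ m, ‖F (m + N)‖ ≤ ‖F m‖ * c := by
    intro m
    rw [pi_norm_le_iff_of_nonneg (mul_nonneg (norm_nonneg _) hc0)]
    intro g
    rw [hFjump m]
    rw [Real.norm_eq_abs]
    exact contraction hpsupp hp0 hp1 hεpos.le hεle (hFzero m) g
  have hbound : ∀ m, ‖F m‖ ≤ ‖F 0‖ * c ^ (m / N) := by
    intro m
    induction m using Nat.strong_induction_on with
    | _ m ih =>
      by_cases hm : m < N
      · rw [Nat.div_eq_of_lt hm, pow_zero, mul_one]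
        exact hmono' m
      · push_neg at hm
        have hmN : m - N < m := Nat.sub_lt (lt_of_lt_of_le hN hm) hN
        have h1' : m = (m - N) + N := (Nat.sub_add_cancel hm).symm
        have h2' : m / N = (m - N) / N + 1 := by
          conv_lhs => rw [h1']
          exact Nat.add_div_right _ hN
        calc ‖F m‖ = ‖F ((m - N) + N)‖ := by rw [← h1']
          _ ≤ ‖F (m - N)‖ * c := hcontr _
          _ ≤ (‖F 0‖ * c ^ ((m - N) / N)) * c :=
              mul_le_mul_of_nonneg_right (ih _ hmN) hc0
          _ = ‖F 0‖ * c ^ (m / N) := by rw [h2', pow_succ]; ring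
  intro g
  rw [tendsto_iff_norm_sub_tendsto_zero]
  have hdiv : Filter.Tendsto (fun m : ℕ => m / N) Filter.atTop Filter.atTop := by
    rw [Filter.tendsto_atTop_atTop]
    intro b
    exact ⟨b * N, fun a ha => le_trans (le_of_eq (Nat.mul_div_cancel b hN).symm)
      (Nat.div_le_div_right ha)⟩
  have hgeo : Filter.Tendsto (fun m : ℕ => ‖F 0‖ * c ^ (m / N)) Filter.atTop (nhds 0) := by
    have := ((tendsto_pow_atTop_nhds_zero_of_lt_one hc0 hc1).comp hdiv).const_mul ‖F 0‖
    simpa using this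
  refine squeeze_zero (fun m => norm_nonneg _) (fun m => ?_) hgeo
  calc ‖conv μ (convPow ν m) g - η g‖ = ‖F m g‖ := by simp [hF]
    _ ≤ ‖F m‖ := norm_le_pi_norm (F m) g
    _ ≤ ‖F 0‖ * c ^ (m / N) := hbound m

end main

set_option maxHeartbeats 1000000 in
open scoped Classical in
/-- For acyclic `ν` with `H = ⟨supp ν⟩` and `η` constant on left cosets of `H`, the basin of
attraction of `η` under `T_ν(μ) = μ * ν` is convex, and equals the set of probability
measures assigning each left coset `gH` the total mass `|H| · η(g)`. -/
theorem basin_convex_and_affine {G : Type*} [Group G] [Fintype G] [DecidableEq G]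
    (ν : G → ℝ) (h0 : ∀ g, 0 ≤ ν g) (h1 : ∑ g, ν g = 1)
    (H : Subgroup G) (hH : H = Subgroup.closure {g : G | 0 < ν g})
    (hacyclic : ∃ N : ℕ, 0 < N ∧ {g : G | 0 < ν g} ^ N = (H : Set G))
    (η : G → ℝ) (hη0 : ∀ g, 0 ≤ η g) (hη1 : ∑ g, η g = 1)
    (hconst : ∀ g h : G, h ∈ H → η (g * h) = η g) :
    Convex ℝ {μ : G → ℝ | (∀ g, 0 ≤ μ g) ∧ (∑ g, μ g = 1) ∧
        ∀ g : G, Filter.Tendsto (fun m => conv μ (convPow ν m) g) Filter.atTop (nhds (η g))} ∧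
    {μ : G → ℝ | (∀ g, 0 ≤ μ g) ∧ (∑ g, μ g = 1) ∧
        ∀ g : G, Filter.Tendsto (fun m => conv μ (convPow ν m) g) Filter.atTop (nhds (η g))}
      = {μ : G → ℝ | (∀ g, 0 ≤ μ g) ∧ (∑ g, μ g = 1) ∧
          ∀ g : G, ∑ h : H, μ (g * (h : G)) = (Nat.card H : ℝ) * η g} := by
  have hsupp : ∀ x ∉ H, ν x = 0 := by
    intro x hx
    by_contra hne
    exact hx (hH ▸ Subgroup.subset_closure (Set.mem_setOf.mpr ((h0 x).lt_of_ne (Ne.symm hne))))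
  have heq : {μ : G → ℝ | (∀ g, 0 ≤ μ g) ∧ (∑ g, μ g = 1) ∧
        ∀ g : G, Filter.Tendsto (fun m => conv μ (convPow ν m) g) Filter.atTop (nhds (η g))}
      = {μ : G → ℝ | (∀ g, 0 ≤ μ g) ∧ (∑ g, μ g = 1) ∧
          ∀ g : G, ∑ h : H, μ (g * (h : G)) = (Nat.card H : ℝ) * η g} := by
    ext μ
    simp only [Set.mem_setOf_eq]
    refine ⟨fun ⟨hμ0, hμ1, hlim⟩ => ⟨hμ0, hμ1, fun g => ?_⟩,
      fun ⟨hμ0, hμ1, hcoset⟩ => ⟨hμ0, hμ1,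
        main_tendsto ν h0 h1 H hH hacyclic η hconst μ hcoset⟩⟩
    obtain ⟨u, hlim', hconstseq⟩ :
        ∃ u : ℕ → G → ℝ, (∀ x : G, Filter.Tendsto (fun m => u m x) Filter.atTop (nhds (η x)))
          ∧ ∀ m, ∑ h : H, u m (g * ↑h) = ∑ h : H, μ (g * ↑h) :=
      ⟨fun m => conv μ (convPow ν m), fun x => hlim x,
        fun m => conv_cosetSum (convPow_support hsupp m) (convPow_sum h1 m) g⟩
    have ht1 : Filter.Tendsto (fun m => ∑ h : H, u m (g * ↑h))
        Filter.atTop (nhds (∑ h : H, η (g * ↑h))) :=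
      tendsto_finset_sum _ (fun h _ => hlim' (g * ↑h))
    have ht2 : Filter.Tendsto (fun m => ∑ h : H, u m (g * ↑h))
        Filter.atTop (nhds (∑ h : H, μ (g * ↑h))) := by
      simp only [hconstseq]; exact tendsto_const_nhds
    rw [tendsto_nhds_unique ht2 ht1,
      Finset.sum_congr rfl (fun (h : H) _ => hconst g ↑h h.2)]
    simp [Finset.sum_const, Nat.card_eq_fintype_card, mul_comm]
  refine ⟨?_, heq⟩
  rw [heq]
  rintro μ1 ⟨hμ10, hμ11, hμ1c⟩ μ2 ⟨hμ20, hμ21, hμ2c⟩ a b ha hb hab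
  refine ⟨fun g => ?_, ?_, fun g => ?_⟩
  · exact add_nonneg (mul_nonneg ha (hμ10 g)) (mul_nonneg hb (hμ20 g))
  · simp only [Pi.add_apply, Pi.smul_apply, smul_eq_mul, Finset.sum_add_distrib,
      ← Finset.mul_sum, hμ11, hμ21]
    linarith
  · simp only [Pi.add_apply, Pi.smul_apply, smul_eq_mul, Finset.sum_add_distrib,
      ← Finset.mul_sum, hμ1c g, hμ2c g]
    linear_combination ((Nat.card H : ℝ) * η g) * hab
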